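/- Let G ∈ ℂ[r,z,t] be homogeneous with only even powers of r, and let F(x,y,z,t) = G(√(x²+y²), z, t) (a polynomial since G is even in r). Write F_r := G_r∘h etc. with h(x,y,z,t) = (√(x²+y²),z,t) and r = √(x²+y²). Then the bordered Hessian determinants satisfy h_F = (F_r/r)·(h_G ∘ h), where h_F = det [[F_xx,F_xy,F_xz,F_x],[F_xy,F_yy,F_yz,F_y],[F_xz,F_yz,F_zz,F_z],[F_x,F_y,F_z,0]] and h_G = det [[G_rr,G_rz,G_r],[G_rz,G_zz,G_z],[G_r,G_z,0]]. -/

import Mathlib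

lemma det4 (a b c d e f g h i j k l m n o p : ℂ) :
    Matrix.det !![a,b,c,d;e,f,g,h;i,j,k,l;m,n,o,p] =
      a*(f*(k*p-l*o) - g*(j*p-l*n) + h*(j*o-k*n))
      - b*(e*(k*p-l*o) - g*(i*p-l*m) + h*(i*o-k*m))
      + c*(e*(j*p-l*n) - f*(i*p-l*m) + h*(i*n-j*m))
      - d*(e*(j*o-k*n) - f*(i*o-k*m) + g*(i*n-j*m)) := by
  simp [Matrix.det_succ_row_zero, Fin.sum_univ_succ, Matrix.det_fin_three, Fin.succAbove,
    show (Fin.castSucc 2 : Fin 4) = 2 from rfl, Matrix.cons_val_two, Matrix.tail_cons]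
  ring

/-- Chain-rule identity for a surface of revolution: with `r² = x² + y²` and the
first and second derivatives of `F = G(√(x²+y²),z,t)` expressed by the chain rule in
terms of those of `G`, the two bordered Hessian determinants satisfy
`h_F = (F_r/r)·h_G`. -/
theorem stmt12 (x y r Fr Frr Frz Fzz Fz : ℂ) (hr : r ^ 2 = x ^ 2 + y ^ 2)
    (hy : y ≠ 0) (hr0 : r ≠ 0) :
    Matrix.det
      !![Fr / r + (x ^ 2 / r ^ 2) * Frr - (x ^ 2 / r ^ 3) * Fr,
          (x * y / r ^ 2) * Frr - (x * y / r ^ 3) * Fr, (x / r) * Frz, (x / r) * Fr;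
        (x * y / r ^ 2) * Frr - (x * y / r ^ 3) * Fr,
          Fr / r + (y ^ 2 / r ^ 2) * Frr - (y ^ 2 / r ^ 3) * Fr, (y / r) * Frz,
          (y / r) * Fr;
        (x / r) * Frz, (y / r) * Frz, Fzz, Fz;
        (x / r) * Fr, (y / r) * Fr, Fz, 0] =
      (Fr / r) * Matrix.det !![Frr, Frz, Fr; Frz, Fzz, Fz; Fr, Fz, 0] := by
  obtain ⟨u, rfl⟩ : ∃ u, x = u * r := ⟨x / r, by field_simp⟩
  obtain ⟨v, rfl⟩ : ∃ v, y = v * r := ⟨y / r, by field_simp⟩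
  obtain ⟨g, rfl⟩ : ∃ g, Fr = g * r := ⟨Fr / r, by field_simp⟩
  have hu : u ^ 2 + v ^ 2 = 1 := by
    apply mul_left_cancel₀ (pow_ne_zero 2 hr0)
    linear_combination -hr
  have e1 : g * r / r + ((u * r) ^ 2 / r ^ 2) * Frr - ((u * r) ^ 2 / r ^ 3) * (g * r)
      = g + u ^ 2 * Frr - u ^ 2 * g := by field_simp
  have e2 : ((u * r) * (v * r) / r ^ 2) * Frr - ((u * r) * (v * r) / r ^ 3) * (g * r)
      = u * v * Frr - u * v * g := by field_simp
  have e3 : g * r / r + ((v * r) ^ 2 / r ^ 2) * Frr - ((v * r) ^ 2 / r ^ 3) * (g * r)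
      = g + v ^ 2 * Frr - v ^ 2 * g := by field_simp
  have e4 : (u * r / r) * Frz = u * Frz := by field_simp
  have e5 : (v * r / r) * Frz = v * Frz := by field_simp
  have e6 : (u * r / r) * (g * r) = u * g * r := by field_simp
  have e7 : (v * r / r) * (g * r) = v * g * r := by field_simp
  have e8 : g * r / r = g := by field_simp
  rw [e1, e2, e3, e4, e5, e6, e7, e8, det4, Matrix.det_fin_three]
  norm_num [Matrix.cons_val_zero, Matrix.cons_val_one, Matrix.head_cons,
    Matrix.cons_val_two, Matrix.tail_cons, Matrix.cons_val', Matrix.empty_val',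
    Matrix.cons_val_fin_one]
  linear_combination (-(g * Frr * Fz ^ 2) + g ^ 2 * Fz ^ 2 + 2 * r * g ^ 2 * Frz * Fz
    - r ^ 2 * g ^ 3 * Fzz) * hu
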